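/- The higher-dimensional prolate operator W f = ∇·((1-|x|²)∇f) - |x|² f commutes with the Fourier transform on Schwartz functions: ℱ W ℱ^{-1} = W. Equivalently, W = L + M - 1 where both sides commute with ℱ. -/

import Mathlib

open MeasureTheory Filter Topology
noncomputable section

/-- Euclidean space ℝ^d. -/
abbrev Ed (d : ℕ) := EuclideanSpace ℝ (Fin d)

/-- Partial derivative ∂ᵢ of a complex-valued function. -/
def pd {d : ℕ} (i : Fin d) (f : Ed d → ℂ) (x : Ed d) : ℂ :=
  fderiv ℝ f x (EuclideanSpace.single i 1)

/-- Laplacian Δ = ∑ᵢ ∂ᵢ². -/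
def lap {d : ℕ} (f : Ed d → ℂ) (x : Ed d) : ℂ := ∑ i, pd i (pd i f) x

/-- Radial derivative r∂ᵣ = ∑ᵢ xᵢ ∂ᵢ. -/
def rdr {d : ℕ} (f : Ed d → ℂ) (x : Ed d) : ℂ := ∑ i, (x i : ℂ) * pd i f x

/-- Legendre operator L f = ∇·((1-|x|²)∇f). -/
def legendreOp {d : ℕ} (f : Ed d → ℂ) (x : Ed d) : ℂ :=
  ∑ i, pd i (fun y => ((1 - ‖y‖ ^ 2 : ℝ) : ℂ) * pd i f y) x

/-- Prolate operator W f = L f - |x|² f. -/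
def prolateOp {d : ℕ} (f : Ed d → ℂ) (x : Ed d) : ℂ :=
  legendreOp f x - ((‖x‖ ^ 2 : ℝ) : ℂ) * f x

/-- The Fourier transform ℱf(p) = (2π)^{-d/2} ∫ e^{-i x·p} f(x) dx. -/
def FT {d : ℕ} (f : Ed d → ℂ) (p : Ed d) : ℂ :=
  (((2 * Real.pi) ^ (-(d : ℝ) / 2) : ℝ) : ℂ) *
    ∫ x : Ed d, Complex.exp (-Complex.I * ((inner ℝ x p : ℝ) : ℂ)) * f x

namespace ProlateAux

open SchwartzMap Real Complex FourierTransform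

variable {d : ℕ}

/-- Derivative operator on Schwartz space. -/
def Pop (i : Fin d) : 𝓢(Ed d, ℂ) →L[ℂ] 𝓢(Ed d, ℂ) :=
  LineDeriv.lineDerivOpCLM ℂ 𝓢(Ed d, ℂ) (EuclideanSpace.single i (1 : ℝ))

lemma Pop_apply (i : Fin d) (f : 𝓢(Ed d, ℂ)) (x : Ed d) :
    Pop i f x = pd i (⇑f) x := rfl

lemma coe_Pop (i : Fin d) (f : 𝓢(Ed d, ℂ)) : ⇑(Pop i f) = pd i (⇑f) := rfl

/-- Coordinate multiplication operator on Schwartz space. -/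
def Xop (i : Fin d) : 𝓢(Ed d, ℂ) →L[ℝ] 𝓢(Ed d, ℂ) :=
  SchwartzMap.bilinLeftCLM ((ContinuousLinearMap.lsmul ℝ ℝ : ℝ →L[ℝ] ℂ →L[ℝ] ℂ).flip)
    ((EuclideanSpace.proj (𝕜 := ℝ) i).hasTemperateGrowth)

lemma Xop_apply (i : Fin d) (f : 𝓢(Ed d, ℂ)) (x : Ed d) :
    Xop i f x = (x i : ℂ) * f x := by
  show (x i : ℝ) • f x = _
  rw [Complex.real_smul]

lemma Xop_smul (i : Fin d) (a : ℂ) (f : 𝓢(Ed d, ℂ)) : Xop i (a • f) = a • Xop i f := by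
  ext x
  simp only [Xop_apply, SchwartzMap.smul_apply, smul_eq_mul]
  ring

lemma Pop_smul (i : Fin d) (a : ℂ) (f : 𝓢(Ed d, ℂ)) : Pop i (a • f) = a • Pop i f :=
  map_smul (Pop i) a f

lemma sum_apply' {ι : Type*} (s : Finset ι) (F : ι → 𝓢(Ed d, ℂ)) (x : Ed d) :
    (∑ j ∈ s, F j) x = ∑ j ∈ s, F j x := by
  change (FunLike.coeAddMonoidHom 𝓢(Ed d, ℂ) (Ed d) ℂ (∑ j ∈ s, F j)) x = _
  rw [map_sum]
  simp [Finset.sum_apply, FunLike.coe_coeAddMonoidHom]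

lemma Pop_Xop (i j : Fin d) (f : 𝓢(Ed d, ℂ)) :
    Pop i (Xop j f) = Xop j (Pop i f) + (if i = j then f else 0) := by
  ext x
  have hcoe : ⇑(Xop j f) = fun y : Ed d => ((y j : ℝ) : ℂ) * f y := funext fun y => Xop_apply j f y
  have hc : DifferentiableAt ℝ (fun y : Ed d => ((y j : ℝ) : ℂ)) x :=
    (Complex.ofRealCLM.comp (EuclideanSpace.proj (𝕜 := ℝ) j)).differentiableAt
  have hf : DifferentiableAt ℝ (⇑f) x := f.differentiable.differentiableAt
  have hXc : Pop i (Xop j f) x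
      = ((x j : ℝ) : ℂ) * pd i (⇑f) x + f x * pd i (fun y : Ed d => ((y j : ℝ) : ℂ)) x := by
    rw [Pop_apply, pd, hcoe, fderiv_fun_mul hc hf]
    simp [pd, smul_eq_mul]
  have hder : pd i (fun y : Ed d => ((y j : ℝ) : ℂ)) x = if i = j then 1 else 0 := by
    have : (fun y : Ed d => ((y j : ℝ) : ℂ))
        = ⇑(Complex.ofRealCLM.comp (EuclideanSpace.proj (𝕜 := ℝ) j)) := rfl
    rw [pd, this, ContinuousLinearMap.fderiv]
    simp only [ContinuousLinearMap.coe_comp', Function.comp_apply]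
    rw [show (EuclideanSpace.proj (𝕜 := ℝ) j) (EuclideanSpace.single i 1) = if i = j then 1 else 0
      from by simp [EuclideanSpace.single_apply, eq_comm]]
    split_ifs <;> simp
  rw [hXc, hder]
  by_cases h : i = j
  · subst h
    simp [SchwartzMap.add_apply, Xop_apply, Pop_apply]
  · simp [h, SchwartzMap.add_apply, Xop_apply, Pop_apply]

lemma Pop_Xop_same (i : Fin d) (f : 𝓢(Ed d, ℂ)) :
    Pop i (Xop i f) = Xop i (Pop i f) + f := by
  simp [Pop_Xop]

lemma Pop_Xop_ne {i j : Fin d} (h : i ≠ j) (f : 𝓢(Ed d, ℂ)) :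
    Pop i (Xop j f) = Xop j (Pop i f) := by
  simp [Pop_Xop, h]

lemma swapPX (i j : Fin d) (f : 𝓢(Ed d, ℂ)) :
    Pop i (Xop j (Xop j (Pop i f))) = Xop j (Pop i (Pop i (Xop j f))) := by
  by_cases h : i = j
  · subst h
    simp only [Pop_Xop_same, map_add]
    try abel
  · simp only [Pop_Xop_ne h]

/-- The scaling map p ↦ (2π)⁻¹ • p as a continuous linear equivalence. -/
def scaleEquiv (d : ℕ) : Ed d ≃L[ℝ] Ed d :=
  (LinearEquiv.smulOfNeZero ℝ (Ed d) ((2 * Real.pi)⁻¹)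
    (by positivity)).toContinuousLinearEquiv

lemma scaleEquiv_apply (p : Ed d) : scaleEquiv d p = (2 * Real.pi)⁻¹ • p := rfl

/-- Normalization constant. -/
def cst (d : ℕ) : ℝ := (2 * Real.pi) ^ (-(d : ℝ) / 2)

set_option synthInstance.maxHeartbeats 1000000 in
/-- Schwartz-space version of the Fourier transform `FT`. -/
def FTS : 𝓢(Ed d, ℂ) →L[ℝ] 𝓢(Ed d, ℂ) :=
  cst d • (((SchwartzMap.compCLMOfContinuousLinearEquiv ℝ (scaleEquiv d)).comp
    (SchwartzMap.fourierTransformCLM ℝ)) : 𝓢(Ed d, ℂ) →L[ℝ] 𝓢(Ed d, ℂ))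

lemma FTS_apply (f : 𝓢(Ed d, ℂ)) (p : Ed d) :
    FTS f p = ((cst d : ℝ) : ℂ) * 𝓕 (⇑f) ((2 * Real.pi)⁻¹ • p) := by
  have : FTS f p = (cst d : ℝ) • (𝓕 (⇑f) ((2 * Real.pi)⁻¹ • p)) := rfl
  rw [this, Complex.real_smul]

lemma FT_eq_FTS (f : 𝓢(Ed d, ℂ)) (p : Ed d) : FT (⇑f) p = FTS f p := by
  rw [FTS_apply, FT, Real.fourier_eq']
  congr 1
  refine integral_congr_ae (Eventually.of_forall fun x => ?_)
  simp only [smul_eq_mul]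
  congr 1
  rw [real_inner_smul_right]
  have h2 : (2 * Real.pi) ≠ 0 := by positivity
  rw [show -2 * Real.pi * ((2 * Real.pi)⁻¹ * (inner ℝ x p : ℝ)) = -(inner ℝ x p : ℝ) by
    field_simp]
  push_cast
  ring

/-- An auxiliary smul lemma for the Fourier integral. -/
lemma fourierIntegral_const_mul (a : ℂ) (g : Ed d → ℂ) (w : Ed d) :
    𝓕 (fun x => a * g x) w = a * 𝓕 g w := by
  rw [Real.fourier_eq, Real.fourier_eq, ← smul_eq_mul, ← integral_smul]
  congr 1
  funext x
  simp only [Circle.smul_def, smul_eq_mul]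
  ring

lemma integrable_fderiv_schwartz (f : 𝓢(Ed d, ℂ)) : Integrable (fderiv ℝ (⇑f)) volume := by
  have : ⇑(SchwartzMap.fderivCLM ℝ (Ed d) ℂ f) = fderiv ℝ (⇑f) :=
    funext fun x => SchwartzMap.fderivCLM_apply ℝ f x
  rw [← this]
  exact (SchwartzMap.fderivCLM ℝ (Ed d) ℂ f).integrable

lemma integrable_norm_mul (f : 𝓢(Ed d, ℂ)) :
    Integrable (fun x : Ed d => ‖x‖ * ‖f x‖) volume := by
  simpa using f.integrable_pow_mul (volume) 1

/-- FT of a derivative: `FTS (Pop i f) = I • Xop i (FTS f)`. -/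
lemma FTS_Pop (i : Fin d) (f : 𝓢(Ed d, ℂ)) :
    FTS (Pop i f) = Complex.I • Xop i (FTS f) := by
  ext p
  have hfd := integrable_fderiv_schwartz f
  have key := Real.fourier_fderiv f.integrable f.differentiable hfd
  have h1 : 𝓕 (⇑(Pop i f)) ((2 * Real.pi)⁻¹ • p)
      = 𝓕 (fderiv ℝ (⇑f)) ((2 * Real.pi)⁻¹ • p) (EuclideanSpace.single i 1) := by
    rw [Real.fourier_continuousLinearMap_apply hfd]
    rfl
  rw [FTS_apply, h1, key]
  rw [SchwartzMap.smul_apply, Xop_apply, FTS_apply]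
  rw [VectorFourier.fourierSMulRight_apply]
  have hinner : (-(innerSL ℝ)) ((2 * Real.pi)⁻¹ • p) (EuclideanSpace.single i 1)
      = -((2 * Real.pi)⁻¹ * p i) := by
    simp only [ContinuousLinearMap.neg_apply, innerSL_apply_apply]
    rw [real_inner_smul_left, EuclideanSpace.inner_single_right]
    simp
  rw [hinner]
  set A := 𝓕 (⇑f) ((2 * Real.pi)⁻¹ • p) with hA
  simp only [Complex.real_smul, smul_eq_mul]
  have h2pi : ((Real.pi : ℂ)) ≠ 0 := Complex.ofReal_ne_zero.mpr Real.pi_ne_zero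
  push_cast
  field_simp

/-- FT of coordinate multiplication: `FTS (Xop i f) = I • Pop i (FTS f)`. -/
lemma FTS_Xop (i : Fin d) (f : 𝓢(Ed d, ℂ)) :
    FTS (Xop i f) = Complex.I • Pop i (FTS f) := by
  ext p
  -- integrability facts
  have hint1 : Integrable (fun x : Ed d => ‖x‖ * ‖f x‖) volume := integrable_norm_mul f
  have hsm : Integrable (VectorFourier.fourierSMulRight (innerSL ℝ) (⇑f)) volume := by
    refine (hint1.const_mul (2 * Real.pi)).mono'
      f.continuous.aestronglyMeasurable.fourierSMulRight ?_
    filter_upwards with x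
    rw [VectorFourier.norm_fourierSMulRight, innerSL_apply_norm]
    rw [mul_assoc]
  -- derivative of the Fourier transform
  have hder := Real.fderiv_fourier f.integrable hint1
  -- The function FTS f as a scaled composition
  have hcoe : ⇑(FTS f) = fun q : Ed d =>
      ((cst d : ℝ) : ℂ) * 𝓕 (⇑f) ((2 * Real.pi)⁻¹ • q) := funext fun q => FTS_apply f q
  -- differentiability of 𝓕 f
  have hdiff : Differentiable ℝ (𝓕 (⇑f)) := by
    have : 𝓕 (⇑f) = ⇑(SchwartzMap.fourierTransformCLM ℝ f) := rfl
    rw [this]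
    exact (SchwartzMap.fourierTransformCLM ℝ f).differentiable
  -- compute pd i (FTS f) p
  have hchain : pd i (⇑(FTS f)) p
      = ((cst d : ℝ) : ℂ) * ((2 * Real.pi)⁻¹ •
          fderiv ℝ (𝓕 (⇑f)) ((2 * Real.pi)⁻¹ • p) (EuclideanSpace.single i 1)) := by
    rw [hcoe, pd]
    have hinner : HasFDerivAt (fun q : Ed d => 𝓕 (⇑f) ((2 * Real.pi)⁻¹ • q))
        ((fderiv ℝ (𝓕 (⇑f)) ((2 * Real.pi)⁻¹ • p)).comp
          ((2 * Real.pi)⁻¹ • (ContinuousLinearMap.id ℝ (Ed d)))) p := by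
      have hs : HasFDerivAt (fun q : Ed d => (2 * Real.pi)⁻¹ • q)
          ((2 * Real.pi)⁻¹ • (ContinuousLinearMap.id ℝ (Ed d))) p :=
        (((2 * Real.pi)⁻¹ • (ContinuousLinearMap.id ℝ (Ed d))) :
          Ed d →L[ℝ] Ed d).hasFDerivAt
      exact ((hdiff ((2 * Real.pi)⁻¹ • p)).hasFDerivAt).comp p hs
    have := (hinner.const_mul ((cst d : ℝ) : ℂ)).fderiv
    rw [this]
    simp [smul_smul]
  rw [SchwartzMap.smul_apply, Pop_apply, hchain, hder]
  have h2 : 𝓕 (VectorFourier.fourierSMulRight (innerSL ℝ) (⇑f)) ((2 * Real.pi)⁻¹ • p)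
        (EuclideanSpace.single i 1)
      = 𝓕 (fun x : Ed d => (-(2 * Real.pi) * Complex.I * (x i)) * f x)
          ((2 * Real.pi)⁻¹ • p) := by
    rw [Real.fourier_continuousLinearMap_apply hsm]
    refine congrArg (fun g : Ed d → ℂ => 𝓕 g ((2 * Real.pi)⁻¹ • p)) ?_
    funext x
    rw [VectorFourier.fourierSMulRight_apply]
    have : (innerSL ℝ) x (EuclideanSpace.single i 1) = x i := by
      simp [EuclideanSpace.inner_single_right (𝕜 := ℝ)]
    rw [this]
    simp only [Complex.real_smul, smul_eq_mul, neg_mul]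
    ring
  rw [h2]
  have h3 : 𝓕 (fun x : Ed d => (-(2 * Real.pi) * Complex.I * (x i)) * f x)
        ((2 * Real.pi)⁻¹ • p)
      = (-(2 * Real.pi) * Complex.I) * 𝓕 (fun x : Ed d => (x i : ℂ) * f x)
          ((2 * Real.pi)⁻¹ • p) := by
    rw [← fourierIntegral_const_mul]
    refine congrArg (fun g : Ed d → ℂ => 𝓕 g ((2 * Real.pi)⁻¹ • p)) ?_
    funext x
    ring
  rw [FTS_apply]
  have hXcoe : ⇑(Xop i f) = fun x : Ed d => (x i : ℂ) * f x := funext fun x => Xop_apply i f x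
  rw [hXcoe, smul_eq_mul]
  rw [h3]
  set A := 𝓕 (fun x : Ed d => ((x i : ℝ) : ℂ) * f x) ((2 * Real.pi)⁻¹ • p) with hA
  simp only [Complex.real_smul, smul_eq_mul]
  have h2pi : ((Real.pi : ℂ)) ≠ 0 := Complex.ofReal_ne_zero.mpr Real.pi_ne_zero
  have hI : Complex.I * Complex.I = -1 := Complex.I_mul_I
  push_cast
  field_simp
  linear_combination (((cst d : ℝ) : ℂ) * A) * hI

/-- The prolate operator as a Schwartz-space operator. -/
def Ws (f : 𝓢(Ed d, ℂ)) : 𝓢(Ed d, ℂ) :=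
  (∑ i, Pop i (Pop i f)) - (∑ i, ∑ j, Pop i (Xop j (Xop j (Pop i f)))) -
    ∑ j, Xop j (Xop j f)

lemma normsq_eq (y : Ed d) : (‖y‖ ^ 2 : ℝ) = ∑ j, (y j) ^ 2 := by
  rw [EuclideanSpace.norm_eq, Real.sq_sqrt (by positivity)]
  simp [Real.norm_eq_abs, sq_abs]

/-- Pointwise identity: prolateOp on a Schwartz function equals Ws. -/
lemma prolate_eq_Ws (f : 𝓢(Ed d, ℂ)) (x : Ed d) : prolateOp (⇑f) x = Ws f x := by
  have hcoe : ∀ i : Fin d, (fun y : Ed d => ((1 - ‖y‖ ^ 2 : ℝ) : ℂ) * pd i (⇑f) y)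
      = ⇑(Pop i f - ∑ j, Xop j (Xop j (Pop i f))) := by
    intro i
    funext y
    rw [SchwartzMap.sub_apply, sum_apply']
    rw [Pop_apply]
    have : ∀ j : Fin d, Xop j (Xop j (Pop i f)) y = (y j : ℂ) * ((y j : ℂ) * pd i (⇑f) y) := by
      intro j
      rw [Xop_apply, Xop_apply, Pop_apply]
    simp_rw [this]
    rw [normsq_eq]
    push_cast
    rw [sub_mul, one_mul, Finset.sum_mul]
    congr 1
    exact Finset.sum_congr rfl fun j _ => by ring
  have hleg : legendreOp (⇑f) x
      = ∑ i, (Pop i (Pop i f) x - ∑ j, Pop i (Xop j (Xop j (Pop i f))) x) := by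
    rw [legendreOp]
    refine Finset.sum_congr rfl fun i _ => ?_
    rw [hcoe i]
    have : pd i (⇑(Pop i f - ∑ j, Xop j (Xop j (Pop i f)))) x
        = Pop i (Pop i f - ∑ j, Xop j (Xop j (Pop i f))) x := rfl
    rw [this, map_sub, map_sum, SchwartzMap.sub_apply, sum_apply']
  have hmul : ((‖x‖ ^ 2 : ℝ) : ℂ) * f x = ∑ j, Xop j (Xop j f) x := by
    rw [normsq_eq]
    push_cast
    rw [Finset.sum_mul]
    refine Finset.sum_congr rfl fun j _ => ?_
    rw [Xop_apply, Xop_apply]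
    ring
  rw [prolateOp, hleg, hmul, Ws, SchwartzMap.sub_apply, SchwartzMap.sub_apply,
    sum_apply', sum_apply', sum_apply']
  rw [Finset.sum_sub_distrib]
  congr 2
  exact Finset.sum_congr rfl fun i _ => (sum_apply' _ _ _).symm

lemma FTS_Ws (f : 𝓢(Ed d, ℂ)) : FTS (Ws f) = Ws (FTS f) := by
  have e1 : ∀ g : 𝓢(Ed d, ℂ), ∀ i : Fin d,
      FTS (Pop i (Pop i g)) = -(Xop i (Xop i (FTS g))) := by
    intro g i
    rw [FTS_Pop, FTS_Pop, Xop_smul, smul_smul, Complex.I_mul_I, neg_one_smul]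
  have e2 : ∀ g : 𝓢(Ed d, ℂ), ∀ j : Fin d,
      FTS (Xop j (Xop j g)) = -(Pop j (Pop j (FTS g))) := by
    intro g j
    rw [FTS_Xop, FTS_Xop, Pop_smul, smul_smul, Complex.I_mul_I, neg_one_smul]
  have e3 : ∀ g : 𝓢(Ed d, ℂ), ∀ i j : Fin d,
      FTS (Pop i (Xop j (Xop j (Pop i g)))) = Xop i (Pop j (Pop j (Xop i (FTS g)))) := by
    intro g i j
    rw [FTS_Pop, FTS_Xop, FTS_Xop, FTS_Pop]
    simp only [Pop_smul, Xop_smul, smul_smul]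
    norm_num
  rw [Ws, map_sub, map_sub, map_sum, map_sum, map_sum]
  simp_rw [e1 f, e2 f, map_sum, e3 f]
  rw [Ws]
  rw [Finset.sum_comm (f := fun i j => Xop i (Pop j (Pop j (Xop i (FTS f)))))]
  simp_rw [← swapPX]
  rw [Finset.sum_neg_distrib, Finset.sum_neg_distrib]
  abel

end ProlateAux

open ProlateAux in
/-- The prolate operator commutes with the Fourier transform. -/
theorem fourier_prolate_commute (d : ℕ) (f : SchwartzMap (Ed d) ℂ) (p : Ed d) :
    FT (prolateOp (⇑f)) p = prolateOp (FT (⇑f)) p := by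
  have h1 : prolateOp (⇑f) = ⇑(Ws f) := funext fun x => prolate_eq_Ws f x
  have h2 : FT (⇑f) = ⇑(FTS f) := funext fun q => FT_eq_FTS f q
  rw [h1, h2, FT_eq_FTS, FTS_Ws]
  exact (prolate_eq_Ws (FTS f) p).symm
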